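/- In the id-assignment system on n agents, there is no infinite sequence of steps starting from the zero state, and every maximal finite sequence of steps starting from the zero state has length exactly n(n − 1)/2 (each step increases the sum of all ids by exactly 1, and terminal states have id sum 0 + 1 + ⋯ + (n − 1)). -/

import Mathlib

/-- A step of the id-assignment system: two distinct agents with equal ids
interact, and the initiator increases its id by one. -/
def IdStep {V : Type*} [DecidableEq V] (s s' : V → ℕ) : Prop :=
  ∃ u v : V, u ≠ v ∧ s u = s v ∧ s' = Function.update s u (s u + 1)

/-- Invariant: for every `k`, at most `card V - k` agents have id `≥ k`. -/
def IdInv {V : Type*} [Fintype V] (s : V → ℕ) : Prop :=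
  ∀ k : ℕ, (Finset.univ.filter (fun v => k ≤ s v)).card ≤ Fintype.card V - k

lemma idInv_zero {V : Type*} [Fintype V] : IdInv (fun _ : V => (0 : ℕ)) := by
  intro k
  cases k with
  | zero => simpa using (Finset.card_filter_le _ _)
  | succ k => simp

lemma idstep_sum {V : Type*} [DecidableEq V] [Fintype V] {s s' : V → ℕ}
    (h : IdStep s s') : ∑ v, s' v = (∑ v, s v) + 1 := by
  obtain ⟨u, v, huv, he, rfl⟩ := h
  rw [Finset.sum_update_of_mem (Finset.mem_univ u),
    Finset.sum_eq_sum_sdiff_singleton_add (Finset.mem_univ u) s]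
  ring

lemma idInv_step {V : Type*} [DecidableEq V] [Fintype V] {s s' : V → ℕ}
    (hs : IdInv s) (h : IdStep s s') : IdInv s' := by
  obtain ⟨u, v, huv, he, rfl⟩ := h
  intro k
  by_cases hk : k = s u + 1
  · subst hk
    set A := Finset.univ.filter (fun w => s u + 1 ≤ s w) with hA
    set B := Finset.univ.filter (fun w => s u ≤ s w) with hB
    have hsub : Finset.univ.filter (fun w => s u + 1 ≤ Function.update s u (s u + 1) w)
        ⊆ insert u A := by
      intro w hw
      simp only [Finset.mem_filter, Finset.mem_univ, true_and] at hw
      by_cases hwu : w = u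
      · simp [hwu]
      · rw [Function.update_of_ne hwu] at hw
        simp [hA, Finset.mem_insert]
        omega
    have huA : u ∉ A := by simp [hA]
    have hvA : v ∉ A := by simp [hA, ← he]
    have hins : insert v (insert u A) ⊆ B := by
      intro w hw
      simp only [Finset.mem_insert] at hw
      rcases hw with rfl | rfl | hw
      · simp [hB, ← he]
      · simp [hB]
      · simp only [hA, Finset.mem_filter, Finset.mem_univ, true_and] at hw
        simp only [hB, Finset.mem_filter, Finset.mem_univ, true_and]
        omega
    have hcard2 : A.card + 2 ≤ B.card := by
      have h1 : (insert v (insert u A)).card = A.card + 2 := by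
        rw [Finset.card_insert_of_notMem, Finset.card_insert_of_notMem huA]
        simp only [Finset.mem_insert]
        push_neg
        exact ⟨huv.symm, hvA⟩
      calc A.card + 2 = (insert v (insert u A)).card := h1.symm
        _ ≤ B.card := Finset.card_le_card hins
    have hBle : B.card ≤ Fintype.card V - s u := hs (s u)
    have hle : (Finset.univ.filter
        (fun w => s u + 1 ≤ Function.update s u (s u + 1) w)).card ≤ A.card + 1 := by
      calc _ ≤ (insert u A).card := Finset.card_le_card hsub
        _ ≤ A.card + 1 := Finset.card_insert_le _ _
    omega
  · have : Finset.univ.filter (fun w => k ≤ Function.update s u (s u + 1) w)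
        = Finset.univ.filter (fun w => k ≤ s w) := by
      apply Finset.filter_congr
      intro w _
      by_cases hwu : w = u
      · subst hwu
        rw [Function.update_self]
        constructor <;> intro <;> omega
      · rw [Function.update_of_ne hwu]
    rw [this]
    exact hs k

lemma idInv_lt {V : Type*} [Fintype V] {s : V → ℕ} (hs : IdInv s) (v : V) :
    s v < Fintype.card V := by
  by_contra h
  push_neg at h
  have := hs (Fintype.card V)
  have hv : v ∈ Finset.univ.filter (fun w => Fintype.card V ≤ s w) := by
    simp [h]
  have := Finset.card_pos.mpr ⟨v, hv⟩
  omega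

lemma sum_of_inj {V : Type*} [Fintype V] {s : V → ℕ} (hinj : Function.Injective s)
    (hlt : ∀ v, s v < Fintype.card V) :
    ∑ v, s v = Fintype.card V * (Fintype.card V - 1) / 2 := by
  set n := Fintype.card V with hn
  let f : V → Fin n := fun v => ⟨s v, hlt v⟩
  have hfi : Function.Injective f := fun a b h => hinj (by simpa [f, Fin.ext_iff] using h)
  have hf : Function.Bijective f :=
    (Fintype.bijective_iff_injective_and_card f).2 ⟨hfi, by simp [hn]⟩
  have h1 : ∑ v, s v = ∑ i : Fin n, (i : ℕ) :=
    Fintype.sum_bijective f hf (fun v => s v) (fun i => (i : ℕ)) (fun _ => rfl)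
  rw [h1, Fin.sum_univ_eq_sum_range (fun i => i) n, Finset.sum_range_id]

/-- There is no infinite sequence of steps from the zero state, and every
maximal finite sequence of steps from the zero state has length exactly
`n (n - 1) / 2`. -/
theorem id_assignment_terminates {V : Type*} [DecidableEq V] [Fintype V]
    (n : ℕ) (hn : 1 ≤ n) (hcard : Fintype.card V = n) :
    (¬ ∃ c : ℕ → (V → ℕ), c 0 = (fun _ => 0) ∧ ∀ t : ℕ, IdStep (c t) (c (t + 1))) ∧
    (∀ (L : ℕ) (c : ℕ → (V → ℕ)), c 0 = (fun _ => 0) →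
      (∀ t : ℕ, t < L → IdStep (c t) (c (t + 1))) →
      (¬ ∃ s' : V → ℕ, IdStep (c L) s') →
      L = n * (n - 1) / 2) := by
  subst hcard
  constructor
  · rintro ⟨c, h0, hstep⟩
    have hsum : ∀ t, ∑ v, c t v = t := by
      intro t
      induction t with
      | zero => simp [h0]
      | succ t ih => rw [idstep_sum (hstep t), ih]
    have hinv : ∀ t, IdInv (c t) := by
      intro t
      induction t with
      | zero => rw [h0]; exact idInv_zero
      | succ t ih => exact idInv_step ih (hstep t)
    set N := Fintype.card V with hN
    have hb : ∀ t, t ≤ N * N := by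
      intro t
      calc t = ∑ v, c t v := (hsum t).symm
        _ ≤ ∑ _v : V, N := Finset.sum_le_sum fun v _ => (idInv_lt (hinv t) v).le
        _ = N * N := by simp [Finset.sum_const, hN, mul_comm]
    have := hb (N * N + 1)
    omega
  · intro L c h0 hstep hterm
    have hsum : ∀ t, t ≤ L → ∑ v, c t v = t := by
      intro t
      induction t with
      | zero => intro _; simp [h0]
      | succ t ih =>
        intro h
        rw [idstep_sum (hstep t (by omega)), ih (by omega)]
    have hinv : ∀ t, t ≤ L → IdInv (c t) := by
      intro t
      induction t with
      | zero => intro _; rw [h0]; exact idInv_zero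
      | succ t ih =>
        intro h
        exact idInv_step (ih (by omega)) (hstep t (by omega))
    have hinj : Function.Injective (c L) := by
      intro a b hab
      by_contra hne
      exact hterm ⟨_, a, b, hne, hab, rfl⟩
    have := sum_of_inj hinj (idInv_lt (hinv L le_rfl))
    rw [hsum L le_rfl] at this
    exact this
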